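/- Let μ₀ and μ₁ be absolutely continuous probabilistic frames on ℝ^d such that the optimal 2-Wasserstein transport map from μ₀ to μ₁ is linear, r(x) = Ax, with A positive semi-definite (no negative eigenvalues). Then for every t ∈ [0,1], the geodesic measure μ_t = ((1−t)id + tA)_# μ₀ has frame operator S_{μ_t} = ((1−t)I + tA) S_{μ₀} ((1−t)I + tA)^T, which is positive definite; hence μ_t is a probabilistic frame. -/

import Mathlib

open MeasureTheory Matrix
open scoped RealInnerProductSpace

private lemma coord_abs_le {d : ℕ} (x : EuclideanSpace ℝ (Fin d)) (i : Fin d) : |x i| ≤ ‖x‖ := by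
  rw [EuclideanSpace.norm_eq, ← Real.sqrt_sq_eq_abs]
  apply Real.sqrt_le_sqrt
  calc x i ^ 2 = ‖x i‖ ^ 2 := by rw [Real.norm_eq_abs, sq_abs]
    _ ≤ ∑ k, ‖x k‖ ^ 2 :=
      Finset.single_le_sum (f := fun k => ‖x k‖ ^ 2) (fun k _ => by positivity) (Finset.mem_univ i)

private lemma coord_integrable {d : ℕ} (ν : Measure (EuclideanSpace ℝ (Fin d)))
    (h2 : Integrable (fun x : EuclideanSpace ℝ (Fin d) => ‖x‖ ^ 2) ν) (i j : Fin d) :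
    Integrable (fun x : EuclideanSpace ℝ (Fin d) => x i * x j) ν := by
  refine h2.mono' ?_ (ae_of_all _ fun x => ?_)
  · exact ((EuclideanSpace.proj i).continuous.mul
      (EuclideanSpace.proj j).continuous).aestronglyMeasurable
  · rw [Real.norm_eq_abs, abs_mul]
    calc |x i| * |x j| ≤ ‖x‖ * ‖x‖ :=
        mul_le_mul (coord_abs_le x i) (coord_abs_le x j) (abs_nonneg _) (norm_nonneg _)
      _ = ‖x‖ ^ 2 := (sq ‖x‖).symm

private lemma quad_form {d : ℕ} (ν : Measure (EuclideanSpace ℝ (Fin d)))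
    (h2 : Integrable (fun x : EuclideanSpace ℝ (Fin d) => ‖x‖ ^ 2) ν)
    (S : Matrix (Fin d) (Fin d) ℝ) (hS : S = fun i j => ∫ x, x i * x j ∂ν)
    (v : Fin d → ℝ) :
    v ⬝ᵥ S *ᵥ v = ∫ y, ⟪(WithLp.equiv 2 (Fin d → ℝ)).symm v, y⟫ ^ 2 ∂ν := by
  have key : ∀ y : EuclideanSpace ℝ (Fin d),
      ⟪(WithLp.equiv 2 (Fin d → ℝ)).symm v, y⟫ ^ 2 = ∑ i, ∑ j, (v i * v j) * (y i * y j) := by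
    intro y
    rw [sq]
    simp only [PiLp.inner_apply, RCLike.inner_apply, conj_trivial, WithLp.equiv_symm_apply, PiLp.toLp_apply]
    rw [Finset.sum_mul_sum]
    refine Finset.sum_congr rfl fun i _ => Finset.sum_congr rfl fun j _ => by ring
  have hint : ∀ i j : Fin d,
      Integrable (fun y : EuclideanSpace ℝ (Fin d) => (v i * v j) * (y i * y j)) ν :=
    fun i j => (coord_integrable ν h2 i j).const_mul _
  calc v ⬝ᵥ S *ᵥ v = ∑ i, ∑ j, (v i * v j) * ∫ y, y i * y j ∂ν := by
        simp only [dotProduct, mulVec, hS, Finset.mul_sum]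
        exact Finset.sum_congr rfl fun i _ => Finset.sum_congr rfl fun j _ => by ring
    _ = ∑ i, ∑ j, ∫ y, (v i * v j) * (y i * y j) ∂ν := by
        exact Finset.sum_congr rfl fun i _ => Finset.sum_congr rfl fun j _ =>
          (integral_const_mul _ _).symm
    _ = ∫ y, ∑ i, ∑ j, (v i * v j) * (y i * y j) ∂ν := by
        rw [integral_finset_sum _ fun i _ => integrable_finset_sum _ fun j _ => hint i j]
        exact Finset.sum_congr rfl fun i _ =>
          (integral_finset_sum _ fun j _ => hint i j).symm
    _ = ∫ y, ⟪(WithLp.equiv 2 (Fin d → ℝ)).symm v, y⟫ ^ 2 ∂ν := by simp_rw [key]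

private lemma pushforward_matrix {d : ℕ} (μ : Measure (EuclideanSpace ℝ (Fin d)))
    (h2 : Integrable (fun x : EuclideanSpace ℝ (Fin d) => ‖x‖ ^ 2) μ)
    (M S : Matrix (Fin d) (Fin d) ℝ) (hS : S = fun i j => ∫ x, x i * x j ∂μ) (i j : Fin d) :
    (∫ x, x i * x j ∂(μ.map (Matrix.toEuclideanLin M))) = (M * S * Mᵀ) i j := by
  have hφ : AEMeasurable (Matrix.toEuclideanLin M) μ :=
    (LinearMap.continuous_of_finiteDimensional _).measurable.aemeasurable
  have hfm : AEStronglyMeasurable (fun x : EuclideanSpace ℝ (Fin d) => x i * x j)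
      (μ.map (Matrix.toEuclideanLin M)) :=
    ((EuclideanSpace.proj i).continuous.mul
      (EuclideanSpace.proj j).continuous).aestronglyMeasurable
  rw [integral_map hφ hfm]
  have key : ∀ x : EuclideanSpace ℝ (Fin d),
      (Matrix.toEuclideanLin M x) i * (Matrix.toEuclideanLin M x) j
        = ∑ k, ∑ l, (M i k * M j l) * (x k * x l) := by
    intro x
    show (M *ᵥ x) i * (M *ᵥ x) j = _
    simp only [mulVec, dotProduct]
    rw [Finset.sum_mul_sum]
    refine Finset.sum_congr rfl fun k _ => Finset.sum_congr rfl fun l _ => by ring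
  have hint : ∀ k l : Fin d,
      Integrable (fun x : EuclideanSpace ℝ (Fin d) => (M i k * M j l) * (x k * x l)) μ :=
    fun k l => (coord_integrable μ h2 k l).const_mul _
  calc (∫ x, (Matrix.toEuclideanLin M x) i * (Matrix.toEuclideanLin M x) j ∂μ)
      = ∫ x, ∑ k, ∑ l, (M i k * M j l) * (x k * x l) ∂μ := by simp_rw [key]
    _ = ∑ k, ∑ l, (M i k * M j l) * ∫ x, x k * x l ∂μ := by
        rw [integral_finset_sum _ fun k _ => integrable_finset_sum _ fun l _ => hint k l]
        exact Finset.sum_congr rfl fun k _ => by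
          rw [integral_finset_sum _ fun l _ => hint k l]
          exact Finset.sum_congr rfl fun l _ => integral_const_mul _ _
    _ = (M * S * Mᵀ) i j := by
        simp only [Matrix.mul_apply, transpose_apply, Finset.sum_mul]
        simp only [hS]
        rw [Finset.sum_comm]
        exact Finset.sum_congr rfl fun k _ => Finset.sum_congr rfl fun l _ => by ring

/-- If the optimal transport map between two absolutely continuous probabilistic frames is
linear and positive semi-definite, `r(x) = Ax`, then each geodesic measure
`μ_t = ((1−t)I + tA)_# μ₀` has frame operator
`S_{μ_t} = ((1−t)I + tA) S_{μ₀} ((1−t)I + tA)ᵀ`, which is positive definite; hence `μ_t`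
is a probabilistic frame. -/
theorem stmt17 {d : ℕ} (μ₀ μ₁ : Measure (EuclideanSpace ℝ (Fin d)))
    [IsProbabilityMeasure μ₀] [IsProbabilityMeasure μ₁]
    (hac₀ : μ₀ ≪ (volume : Measure (EuclideanSpace ℝ (Fin d))))
    (hac₁ : μ₁ ≪ (volume : Measure (EuclideanSpace ℝ (Fin d))))
    (h₀2 : Integrable (fun x : EuclideanSpace ℝ (Fin d) => ‖x‖ ^ 2) μ₀)
    (h₁2 : Integrable (fun x : EuclideanSpace ℝ (Fin d) => ‖x‖ ^ 2) μ₁)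
    (hframe₀ : ∃ A B : ℝ, 0 < A ∧ A ≤ B ∧ ∀ x : EuclideanSpace ℝ (Fin d),
      A * ‖x‖ ^ 2 ≤ (∫ y, ⟪x, y⟫ ^ 2 ∂μ₀) ∧ (∫ y, ⟪x, y⟫ ^ 2 ∂μ₀) ≤ B * ‖x‖ ^ 2)
    (hframe₁ : ∃ A B : ℝ, 0 < A ∧ A ≤ B ∧ ∀ x : EuclideanSpace ℝ (Fin d),
      A * ‖x‖ ^ 2 ≤ (∫ y, ⟪x, y⟫ ^ 2 ∂μ₁) ∧ (∫ y, ⟪x, y⟫ ^ 2 ∂μ₁) ≤ B * ‖x‖ ^ 2)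
    (A : Matrix (Fin d) (Fin d) ℝ) (hApsd : A.PosSemidef)
    (hpush : μ₁ = μ₀.map (Matrix.toEuclideanLin A))
    (hopt : ∀ γ' : Measure (EuclideanSpace ℝ (Fin d) × EuclideanSpace ℝ (Fin d)),
      γ'.map Prod.fst = μ₀ → γ'.map Prod.snd = μ₁ →
      (∫⁻ x, ENNReal.ofReal (‖x - Matrix.toEuclideanLin A x‖ ^ 2) ∂μ₀) ≤
        ∫⁻ p, ENNReal.ofReal (‖p.1 - p.2‖ ^ 2) ∂γ')
    (S₀ : Matrix (Fin d) (Fin d) ℝ) (hS₀ : S₀ = fun i j => ∫ x, x i * x j ∂μ₀)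
    (t : ℝ) (ht0 : 0 ≤ t) (ht1 : t ≤ 1)
    (μt : Measure (EuclideanSpace ℝ (Fin d)))
    (hμt : μt = μ₀.map (Matrix.toEuclideanLin ((1 - t) • 1 + t • A)))
    (St : Matrix (Fin d) (Fin d) ℝ) (hSt : St = fun i j => ∫ x, x i * x j ∂μt) :
    St = ((1 - t) • 1 + t • A) * S₀ * ((1 - t) • 1 + t • A)ᵀ ∧ St.PosDef := by
  obtain ⟨a₀, b₀, ha₀, -, hfr₀⟩ := hframe₀
  obtain ⟨a₁, b₁, ha₁, -, hfr₁⟩ := hframe₁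
  set M : Matrix (Fin d) (Fin d) ℝ := (1 - t) • 1 + t • A with hM
  have hAsymm : Aᵀ = A := by
    have := hApsd.1
    rwa [IsHermitian, conjTranspose_eq_transpose_of_trivial] at this
  have hMsymm : Mᵀ = M := by
    rw [hM, transpose_add, transpose_smul, transpose_smul, transpose_one, hAsymm]
  -- the frame operator identity
  have hSt' : St = M * S₀ * Mᵀ := by
    ext i j
    rw [hSt]
    show (∫ x, x i * x j ∂μt) = _
    rw [hμt]
    exact pushforward_matrix μ₀ h₀2 M S₀ hS₀ i j
  refine ⟨hSt', ?_⟩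
  -- S₀ is symmetric
  have hS₀symm : S₀ᵀ = S₀ := by
    ext i j
    rw [hS₀]
    show (∫ x, x j * x i ∂μ₀) = ∫ x, x i * x j ∂μ₀
    simp_rw [mul_comm]
  rw [posDef_iff_dotProduct_mulVec]
  constructor
  · -- Hermitian
    rw [IsHermitian, conjTranspose_eq_transpose_of_trivial, hSt', transpose_mul, transpose_mul,
      transpose_transpose, hS₀symm, Matrix.mul_assoc]
  · -- positivity
    intro x hx
    have hxE : (WithLp.toLp 2 x : EuclideanSpace ℝ (Fin d)) ≠ 0 := by simpa using hx
    have hstar : star x = x := by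
      funext i; simp
    rw [hstar]
    rcases eq_or_lt_of_le ht1 with h1 | h1
    · -- t = 1 : μt = μ₁ and use the frame bound for μ₁
      have hMA : M = A := by rw [hM, h1]; simp
      have hμt1 : μt = μ₁ := by rw [hμt, hMA, ← hpush]
      have hq : x ⬝ᵥ St *ᵥ x
          = ∫ y, ⟪(WithLp.equiv 2 (Fin d → ℝ)).symm x, y⟫ ^ 2 ∂μ₁ :=
        quad_form μ₁ h₁2 St (by rw [hSt, hμt1]) x
      rw [hq]
      have hxE' : (WithLp.equiv 2 (Fin d → ℝ)).symm x ≠ 0 := by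
        simpa using hx
      calc (0 : ℝ) < a₁ * ‖(WithLp.equiv 2 (Fin d → ℝ)).symm x‖ ^ 2 := by
            have : ‖(WithLp.equiv 2 (Fin d → ℝ)).symm x‖ ≠ 0 := norm_ne_zero_iff.mpr hxE'
            positivity
        _ ≤ _ := (hfr₁ _).1
    · -- t < 1 : M is injective, reduce to the frame bound for μ₀
      have hw : x ⬝ᵥ St *ᵥ x = (M *ᵥ x) ⬝ᵥ S₀ *ᵥ (M *ᵥ x) := by
        rw [hSt', ← Matrix.mulVec_mulVec, ← Matrix.mulVec_mulVec, Matrix.dotProduct_mulVec,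
          ← Matrix.mulVec_transpose, hMsymm]
      have hMx : M *ᵥ x ≠ 0 := by
        intro h0
        have hdot : x ⬝ᵥ M *ᵥ x = 0 := by rw [h0, dotProduct_zero]
        have hxx : 0 < x ⬝ᵥ x := by
          obtain ⟨i, hi⟩ := Function.ne_iff.mp hx
          rw [dotProduct]
          exact Finset.sum_pos' (fun k _ => mul_self_nonneg _)
            ⟨i, Finset.mem_univ i, mul_self_pos.mpr hi⟩
        have hA0 : 0 ≤ x ⬝ᵥ A *ᵥ x := by
          have := hApsd.dotProduct_mulVec_nonneg x
          rwa [hstar] at this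
        have : 0 < x ⬝ᵥ M *ᵥ x := by
          rw [hM, add_mulVec, smul_mulVec, smul_mulVec, one_mulVec,
            dotProduct_add, dotProduct_smul, dotProduct_smul, smul_eq_mul, smul_eq_mul]
          have h1t : 0 < 1 - t := by linarith
          nlinarith
        exact this.ne' hdot
      have hwE : (WithLp.equiv 2 (Fin d → ℝ)).symm (M *ᵥ x) ≠ 0 := by
        simpa using hMx
      have hq : (M *ᵥ x) ⬝ᵥ S₀ *ᵥ (M *ᵥ x)
          = ∫ y, ⟪(WithLp.equiv 2 (Fin d → ℝ)).symm (M *ᵥ x), y⟫ ^ 2 ∂μ₀ :=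
        quad_form μ₀ h₀2 S₀ hS₀ (M *ᵥ x)
      rw [hw, hq]
      calc (0 : ℝ) < a₀ * ‖(WithLp.equiv 2 (Fin d → ℝ)).symm (M *ᵥ x)‖ ^ 2 := by
            have : ‖(WithLp.equiv 2 (Fin d → ℝ)).symm (M *ᵥ x)‖ ≠ 0 :=
              norm_ne_zero_iff.mpr hwE
            positivity
        _ ≤ _ := (hfr₀ _).1
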